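/- Let 0 < ϰ < π/2 and Q_ϰ = {z ∈ ℂ : z ≠ 0, |arg z − π/2| ≥ ϰ, |arg z + π/2| ≥ ϰ}. Then there is C > 0 such that for all κ ∈ Q_ϰ with |κ| ≤ 1 and all l ≥ 1, one has |κ e^{−κl} / cosh(κl)| ≤ C(|κ| + 1/l). -/

import Mathlib

open Complex Real

private lemma cos_lb (ϰ θ : ℝ) (hϰ0 : 0 < ϰ) (hϰ : ϰ < π / 2) (h0 : 0 ≤ θ) (hπ : θ ≤ π)
    (h : ϰ ≤ |θ - π / 2|) : Real.sin ϰ ≤ |Real.cos θ| := by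
  have hsϰ : Real.sin ϰ = Real.cos (π/2 - ϰ) := (Real.cos_pi_div_two_sub ϰ).symm
  rcases abs_cases (θ - π/2) with ⟨he, _⟩ | ⟨he, _⟩
  · -- θ ≥ π/2 + ϰ, cos θ ≤ cos (π/2+ϰ) = -sin ϰ
    have h1 : π/2 + ϰ ≤ θ := by rw [he] at h; linarith
    have h2 : Real.cos θ ≤ Real.cos (π/2 + ϰ) :=
      Real.cos_le_cos_of_nonneg_of_le_pi (by linarith [Real.pi_pos]) hπ h1
    have h3 : Real.cos (π/2 + ϰ) = - Real.sin ϰ := by rw [Real.cos_add]; simp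
    have : Real.sin ϰ ≤ -Real.cos θ := by rw [h3] at h2; linarith
    calc Real.sin ϰ ≤ -Real.cos θ := this
      _ ≤ |Real.cos θ| := neg_le_abs _
  · have h1 : θ ≤ π/2 - ϰ := by rw [he] at h; linarith
    have h2 : Real.cos (π/2 - ϰ) ≤ Real.cos θ :=
      Real.cos_le_cos_of_nonneg_of_le_pi h0 (by linarith [Real.pi_pos]) h1
    calc Real.sin ϰ = Real.cos (π/2 - ϰ) := hsϰ
      _ ≤ Real.cos θ := h2
      _ ≤ |Real.cos θ| := le_abs_self _

theorem kappa_exp_div_cosh_bound (ϰ : ℝ) (hϰ0 : 0 < ϰ) (hϰ : ϰ < π / 2) :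
    ∃ C > (0:ℝ), ∀ (κ : ℂ) (l : ℝ), κ ≠ 0 →
      ϰ ≤ |Complex.arg κ - π / 2| → ϰ ≤ |Complex.arg κ + π / 2| →
      ‖κ‖ ≤ 1 → 1 ≤ l →
      ‖κ * Complex.exp (-(κ * l)) / Complex.cosh (κ * l)‖ ≤
        C * (‖κ‖ + 1 / l) := by
  have hpi := Real.pi_pos
  have hs : 0 < Real.sin ϰ := Real.sin_pos_of_pos_of_lt_pi hϰ0 (by linarith)
  set s := Real.sin ϰ with hsdef
  refine ⟨2 + 1/s, by positivity, ?_⟩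
  intro κ l hκ h1 h2 habs hl
  have hl0 : (0:ℝ) < l := by linarith
  have hκ0 : 0 < ‖κ‖ := norm_pos_iff.mpr hκ
  -- lower bound on |Re κ|
  have hcos : s ≤ |Real.cos (Complex.arg κ)| := by
    rcases le_or_gt 0 (Complex.arg κ) with h | h
    · exact cos_lb ϰ _ hϰ0 hϰ h (Complex.arg_le_pi κ) h1
    · have := cos_lb ϰ (-(Complex.arg κ)) hϰ0 hϰ (by linarith)
        (by linarith [Complex.neg_pi_lt_arg κ]) (by rwa [show -Complex.arg κ - π/2 = -(Complex.arg κ + π/2) by ring, abs_neg])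
      rwa [Real.cos_neg] at this
  have hre : s * ‖κ‖ ≤ |κ.re| := by
    have := Complex.cos_arg hκ
    have : |κ.re| = ‖κ‖ * |Real.cos (Complex.arg κ)| := by
      rw [this, abs_div, abs_of_pos hκ0]
      field_simp
    rw [this]
    calc s * ‖κ‖ = ‖κ‖ * s := by ring
      _ ≤ ‖κ‖ * |Real.cos (Complex.arg κ)| := by
          exact mul_le_mul_of_nonneg_left hcos hκ0.le
  set z : ℂ := κ * (l:ℂ) with hz
  have hzre : z.re = κ.re * l := by simp [hz, Complex.mul_re]
  have hzre_lb : s * ‖κ‖ * l ≤ |z.re| := by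
    rw [hzre, abs_mul, abs_of_pos hl0]
    exact mul_le_mul_of_nonneg_right hre hl0.le
  have hx : 0 < s * ‖κ‖ * l := by positivity
  -- cosh z = exp(-z) * (exp (2z) + 1) / 2
  have h2z : Complex.exp (2*z) = Complex.exp z * Complex.exp z := by
    rw [← Complex.exp_add]; ring_nf
  have hcosh : Complex.cosh z = Complex.exp (-z) * (Complex.exp (2*z) + 1) / 2 := by
    rw [Complex.cosh, h2z, Complex.exp_neg]
    have := Complex.exp_ne_zero z
    field_simp
  set w : ℂ := Complex.exp (2*z) + 1 with hw
  have hwabs : ‖Complex.exp (2*z)‖ = Real.exp (2 * z.re) := by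
    rw [Complex.norm_exp]; norm_num
  -- lower bound on |w|
  have hd : 2 * (s * ‖κ‖ * l) / (1 + 2 * (s * ‖κ‖ * l)) ≤ ‖w‖ := by
    rcases le_or_gt 0 z.re with hzr | hzr
    · have hxle : 2 * (s * ‖κ‖ * l) ≤ 2 * z.re := by
        have : s * ‖κ‖ * l ≤ z.re := by rwa [_root_.abs_of_nonneg hzr] at hzre_lb
        linarith
      have h1' : Real.exp (2 * z.re) - 1 ≤ ‖w‖ := by
        have hn := norm_sub_norm_le (Complex.exp (2*z)) (-1 : ℂ)
        simp only [sub_neg_eq_add] at hn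
        simpa [hwabs] using hn
      have h2' : 2 * z.re ≤ Real.exp (2*z.re) - 1 := by
        have := Real.add_one_le_exp (2*z.re); linarith
      have h3' : 2 * (s * ‖κ‖ * l) / (1 + 2 * (s * ‖κ‖ * l)) ≤
          2 * (s * ‖κ‖ * l) := by
        rw [div_le_iff₀ (by positivity)]
        nlinarith
      linarith
    · have hxle : 2 * (s * ‖κ‖ * l) ≤ -(2 * z.re) := by
        have : s * ‖κ‖ * l ≤ -z.re := by rwa [abs_of_neg hzr] at hzre_lb
        linarith
      set y : ℝ := -(2 * z.re) with hy
      have hy0 : 0 < y := by linarith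
      have h1' : 1 - Real.exp (2 * z.re) ≤ ‖w‖ := by
        have hn := norm_sub_norm_le (1 : ℂ) (-Complex.exp (2*z))
        simp only [sub_neg_eq_add, norm_neg, map_neg] at hn
        have : ‖1 + Complex.exp (2*z)‖ = ‖w‖ := by rw [hw]; ring_nf
        rw [this] at hn
        simpa [hwabs, norm_neg] using hn
      have h2' : y / (1 + y) ≤ 1 - Real.exp (2*z.re) := by
        have he : Real.exp (2*z.re) = 1 / Real.exp y := by
          rw [hy, Real.exp_neg]; simp
        have h3 : 1 + y ≤ Real.exp y := by linarith [Real.add_one_le_exp y]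
        have hey : (0:ℝ) < 1 + y := by linarith
        have h4 : 1 / Real.exp y ≤ 1 / (1 + y) :=
          one_div_le_one_div_of_le hey h3
        have h5 : 1 - 1/(1+y) = y/(1+y) := by field_simp; ring
        rw [he]; linarith
      have hmono : 2 * (s * ‖κ‖ * l) / (1 + 2 * (s * ‖κ‖ * l)) ≤ y / (1+y) := by
        have : ∀ a b : ℝ, 0 < a → a ≤ b → a/(1+a) ≤ b/(1+b) := by
          intro a b ha hab
          rw [div_le_div_iff₀ (by linarith) (by linarith)]
          nlinarith
        exact this _ _ (by positivity) hxle
      linarith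
  have hwpos : 0 < ‖w‖ := lt_of_lt_of_le (by positivity) hd
  have hwne : w ≠ 0 := by
    intro h; rw [h] at hwpos; simp at hwpos
  have hcoshne : Complex.cosh z ≠ 0 := by
    rw [hcosh]
    exact div_ne_zero (mul_ne_zero (Complex.exp_ne_zero _) hwne) two_ne_zero
  -- key identity
  have hkey : κ * Complex.exp (-z) / Complex.cosh z = 2 * κ / w := by
    rw [hcosh, hw]
    have := Complex.exp_ne_zero (-z)
    field_simp
  have habs_eq : ‖κ * Complex.exp (-z) / Complex.cosh z‖ = 2 * ‖κ‖ / ‖w‖ := by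
    rw [hkey, norm_div, norm_mul]
    norm_num
  rw [habs_eq]
  -- final arithmetic
  have hstep : 2 * ‖κ‖ / ‖w‖ ≤
      2 * ‖κ‖ * (1 + 2 * (s * ‖κ‖ * l)) / (2 * (s * ‖κ‖ * l)) := by
    rw [div_le_div_iff₀ hwpos (by positivity)]
    calc 2 * ‖κ‖ * (2 * (s * ‖κ‖ * l))
        = 2 * ‖κ‖ * (1 + 2 * (s * ‖κ‖ * l)) *
          (2 * (s * ‖κ‖ * l) / (1 + 2 * (s * ‖κ‖ * l))) := by
          field_simp
      _ ≤ 2 * ‖κ‖ * (1 + 2 * (s * ‖κ‖ * l)) * ‖w‖ := by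
          apply mul_le_mul_of_nonneg_left hd (by positivity)
  have hsimp : 2 * ‖κ‖ * (1 + 2 * (s * ‖κ‖ * l)) / (2 * (s * ‖κ‖ * l))
      = 1 / (s * l) + 2 * ‖κ‖ := by
    field_simp
  rw [hsimp] at hstep
  have hfinal : 1 / (s * l) + 2 * ‖κ‖ ≤ (2 + 1/s) * (‖κ‖ + 1/l) := by
    have e1 : 1 / (s*l) = (1/s) * (1/l) := by rw [one_div_mul_eq_div]; field_simp
    have h1l : 0 < 1/l := by positivity
    have h1s : 0 < 1/s := by positivity
    rw [e1]
    have : (2 + 1/s) * (‖κ‖ + 1/l) =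
      2 * ‖κ‖ + 2*(1/l) + (1/s)*‖κ‖ + (1/s)*(1/l) := by ring
    rw [this]
    nlinarith
  linarith
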